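/- Let X, X̄ : ℝ_+ → ℝ^N be continuous with X(0), X̄(0) ∈ W_N, X(0) ≤ X̄(0), and X(t) − X(s) ≤ X̄(t) − X̄(s) for 0 ≤ s ≤ t. Let (q_n^±) and (q̄_n^±) be collision parameters with q_n^+ ≤ q̄_n^+ for n = 2,…,N. If Y and Ȳ are the systems of N competing particles with driving functions X, X̄ and parameters (q_n^±), (q̄_n^±) respectively, then Y(t) ≤ Ȳ(t) for all t ≥ 0. -/

import Mathlib

open Set

/-- `Y` (with extended vector of collision terms `L`, where component `m : Fin (N+1)`
is the collision term `L_{(m-1,m)}` between particles `m-1` and `m` in `0`-indexed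
notation, and the boundary components `0` and `N` vanish identically) is a system of `N`
competing particles with driving function `X` and parameters of collision `qp, qm`. -/
def IsCompetingParticleSystem (N : ℕ) (qp qm : Fin N → ℝ)
    (X Y : ℝ → Fin N → ℝ) (L : ℝ → Fin (N + 1) → ℝ) : Prop :=
  (∀ k, Continuous fun t => Y t k) ∧
  (∀ m, Continuous fun t => L t m) ∧
  (∀ t : ℝ, 0 ≤ t → Monotone (Y t)) ∧
  (∀ t : ℝ, L t 0 = 0 ∧ L t (Fin.last N) = 0) ∧
  (∀ t : ℝ, 0 ≤ t → ∀ k : Fin N,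
    Y t k = X t k + qp k * L t k.castSucc - qm k * L t k.succ) ∧
  (∀ m, L 0 m = 0) ∧
  (∀ m, MonotoneOn (fun t => L t m) (Ici 0)) ∧
  (∀ (k : Fin N) (hk : (k : ℕ) + 1 < N), ∀ s t : ℝ, 0 ≤ s → s ≤ t →
    (∀ u ∈ Icc s t, Y u k ≠ Y u ⟨(k : ℕ) + 1, hk⟩) → L t k.succ = L s k.succ)

/-- Comparison theorem for systems of competing particles: if the driving functions satisfy
`X(0) ≤ X̄(0)` and `X(t) − X(s) ≤ X̄(t) − X̄(s)` for `0 ≤ s ≤ t`, and the collision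
parameters satisfy `q_n^+ ≤ q̄_n^+` for `n = 2, …, N`, then `Y(t) ≤ Ȳ(t)` for all `t ≥ 0`. -/
lemma tele_le (c d F : ℕ → ℝ) (i : ℕ) (hF : ∀ m, 0 ≤ F m) :
    ∀ j, i ≤ j → (∀ p, i < p → p ≤ j → c p ≤ d (p - 1)) →
    ∑ m ∈ Finset.Icc i j, (c m * F m - d m * F (m + 1)) ≤ c i * F i - d j * F (j + 1) := by
  intro j hij
  induction j, hij using Nat.le_induction with
  | base => intro _; simp
  | succ j hij ih =>
    intro hcd
    rw [Finset.sum_Icc_succ_top (by omega)]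
    have h1 := ih (fun p hp1 hp2 => hcd p hp1 (by omega))
    have h2 : c (j+1) ≤ d j := by
      have := hcd (j+1) (by omega) le_rfl
      simpa using this
    nlinarith [hF (j+1), hF (j+2)]

lemma tele_ge (c d F : ℕ → ℝ) (i : ℕ) (hF : ∀ m, 0 ≤ F m) :
    ∀ j, i ≤ j → (∀ p, i < p → p ≤ j → d (p - 1) ≤ c p) →
    c i * F i - d j * F (j + 1) ≤ ∑ m ∈ Finset.Icc i j, (c m * F m - d m * F (m + 1)) := by
  intro j hij
  induction j, hij using Nat.le_induction with
  | base => intro _; simp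
  | succ j hij ih =>
    intro hcd
    rw [Finset.sum_Icc_succ_top (by omega)]
    have h1 := ih (fun p hp1 hp2 => hcd p hp1 (by omega))
    have h2 : d j ≤ c (j+1) := by
      have := hcd (j+1) (by omega) le_rfl
      simpa using this
    nlinarith [hF (j+1), hF (j+2)]

theorem stmt18 (N : ℕ) (hN : 2 ≤ N) (qp qm qpbar qmbar : Fin N → ℝ)
    (hq : ∀ k, 0 < qp k ∧ qp k < 1 ∧ 0 < qm k ∧ qm k < 1)
    (hqbar : ∀ k, 0 < qpbar k ∧ qpbar k < 1 ∧ 0 < qmbar k ∧ qmbar k < 1)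
    (hrel : ∀ (k : Fin N) (hk : (k : ℕ) + 1 < N), qp ⟨(k : ℕ) + 1, hk⟩ + qm k = 1)
    (hrelbar : ∀ (k : Fin N) (hk : (k : ℕ) + 1 < N), qpbar ⟨(k : ℕ) + 1, hk⟩ + qmbar k = 1)
    (hqcomp : ∀ n : Fin N, 1 ≤ (n : ℕ) → qp n ≤ qpbar n)
    (X Xbar Y Ybar : ℝ → Fin N → ℝ) (L Lbar : ℝ → Fin (N + 1) → ℝ)
    (hX : ∀ k, Continuous fun t => X t k) (hXbar : ∀ k, Continuous fun t => Xbar t k)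
    (hX0 : Monotone (X 0)) (hXbar0 : Monotone (Xbar 0))
    (h0 : ∀ k, X 0 k ≤ Xbar 0 k)
    (hincr : ∀ s t : ℝ, 0 ≤ s → s ≤ t → ∀ k, X t k - X s k ≤ Xbar t k - Xbar s k)
    (hY : IsCompetingParticleSystem N qp qm X Y L)
    (hYbar : IsCompetingParticleSystem N qpbar qmbar Xbar Ybar Lbar) :
    ∀ t : ℝ, 0 ≤ t → ∀ k, Y t k ≤ Ybar t k := by
  obtain ⟨hYc, hLc, hYmono, hLedge, hYeq, hL0, hLmono, hLsupp⟩ := hY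
  obtain ⟨hYbc, hLbc, hYbmono, hLbedge, hYbeq, hLb0, hLbmono, hLbsupp⟩ := hYbar
  have hNe : (Finset.univ : Finset (Fin N)).Nonempty := ⟨⟨0, by omega⟩, Finset.mem_univ _⟩
  set g : ℝ → ℝ := fun t => Finset.univ.sup' hNe (fun k => Y t k - Ybar t k) with hgdef
  have hgle : ∀ t k, Y t k - Ybar t k ≤ g t := fun t k =>
    Finset.le_sup' (fun k => Y t k - Ybar t k) (Finset.mem_univ k)
  have hgmem : ∀ t, ∃ k, g t = Y t k - Ybar t k := by
    intro t
    obtain ⟨k, _, hk⟩ := Finset.exists_mem_eq_sup' hNe (fun k => Y t k - Ybar t k)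
    exact ⟨k, hk⟩
  have hg0 : g 0 ≤ 0 := by
    obtain ⟨k, hk⟩ := hgmem 0
    have h1 := hYeq 0 le_rfl k
    have h2 := hYbeq 0 le_rfl k
    rw [hL0, hL0] at h1
    rw [hLb0, hLb0] at h2
    have := h0 k
    rw [hk]
    simp at h1 h2
    linarith
  -- local claim

  have key : ∀ t : ℝ, 0 < t → 0 < g t → ∃ ε : ℝ, 0 < ε ∧ ε ≤ t ∧
      ∀ u ∈ Icc (t - ε) t, g t ≤ g u := by
    intro t ht htg
    obtain ⟨k0, hk0⟩ := hgmem t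
    set S : Finset (Fin N) := Finset.univ.filter (fun m => Y t m = Y t k0) with hSdef
    have hSne : S.Nonempty := ⟨k0, by simp [hSdef]⟩
    set i : Fin N := S.min' hSne with hidef
    have hik0 : i ≤ k0 := S.min'_le k0 (by simp [hSdef])
    have hYi : Y t i = Y t k0 := (Finset.mem_filter.mp (S.min'_mem hSne)).2
    set Tb : Finset (Fin N) := Finset.univ.filter (fun m => Ybar t m = Ybar t k0) with hTdef
    have hTne : Tb.Nonempty := ⟨k0, by simp [hTdef]⟩
    set j : Fin N := Tb.max' hTne with hjdef
    have hk0j : k0 ≤ j := Tb.le_max' k0 (by simp [hTdef])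
    have hYbj : Ybar t j = Ybar t k0 := (Finset.mem_filter.mp (Tb.max'_mem hTne)).2
    have sandY : ∀ m : Fin N, i ≤ m → m ≤ k0 → Y t m = Y t k0 := by
      intro m h1 h2
      exact le_antisymm (hYmono t ht.le h2) (hYi ▸ hYmono t ht.le h1)
    have sandYb : ∀ m : Fin N, k0 ≤ m → m ≤ j → Ybar t m = Ybar t k0 := by
      intro m h1 h2
      exact le_antisymm (hYbj ▸ hYbmono t ht.le h2) (hYbmono t ht.le h1)
    have left : ∀ d : ℕ, ∀ m : Fin N, i ≤ m → (m : ℕ) + d = (k0 : ℕ) →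
        (Y t m - Ybar t m = g t ∧ Ybar t m = Ybar t k0) := by
      intro d
      induction d with
      | zero =>
        intro m him hmd
        have hm : m = k0 := Fin.ext (by omega)
        subst hm
        exact ⟨hk0.symm, rfl⟩
      | succ d ih =>
        intro m him hmd
        have hmN : (m : ℕ) + 1 < N := by have := k0.isLt; omega
        set m' : Fin N := ⟨(m : ℕ) + 1, hmN⟩ with hm'def
        have him' : i ≤ m' := le_trans him (by simp [Fin.le_def, hm'def])
        obtain ⟨hD', hYb'⟩ := ih m' him' (by simp [hm'def]; omega)
        have h1 : Y t m = Y t k0 := sandY m him (by rw [Fin.le_def]; omega)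
        have h2 : Y t m' = Y t k0 := sandY m' him' (by rw [Fin.le_def]; simp [hm'def]; omega)
        have h3 : Ybar t m ≤ Ybar t m' := hYbmono t ht.le (by rw [Fin.le_def]; simp [hm'def])
        have h4 := hgle t m
        constructor
        · linarith
        · linarith
    have right : ∀ d : ℕ, ∀ m : Fin N, (k0 : ℕ) + d = (m : ℕ) → m ≤ j →
        (Y t m - Ybar t m = g t ∧ Y t m = Y t k0) := by
      intro d
      induction d with
      | zero =>
        intro m hmd hmj
        have hm : m = k0 := Fin.ext (by omega)
        subst hm
        exact ⟨hk0.symm, rfl⟩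
      | succ d ih =>
        intro m hmd hmj
        have hmN : (k0 : ℕ) + d < N := by have := m.isLt; omega
        set m' : Fin N := ⟨(k0 : ℕ) + d, hmN⟩ with hm'def
        have hm'j : m' ≤ j := le_trans (by rw [Fin.le_def]; simp [hm'def]; omega) hmj
        obtain ⟨hD', hY'⟩ := ih m' (by simp [hm'def]) hm'j
        have h1 : Ybar t m = Ybar t k0 := sandYb m (by rw [Fin.le_def]; omega) hmj
        have h2 : Ybar t m' = Ybar t k0 := sandYb m' (by rw [Fin.le_def]; simp [hm'def]) hm'j
        have h3 : Y t m' ≤ Y t m := hYmono t ht.le (by rw [Fin.le_def]; simp [hm'def]; omega)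
        have h4 := hgle t m
        constructor
        · linarith
        · linarith
    have block : ∀ m : Fin N, i ≤ m → m ≤ j →
        (Y t m - Ybar t m = g t ∧ Y t m = Y t k0 ∧ Ybar t m = Ybar t k0) := by
      intro m h1 h2
      rcases le_or_gt m k0 with h | h
      · have hl := left ((k0 : ℕ) - (m : ℕ)) m h1 (by rw [Fin.le_def] at h; omega)
        exact ⟨hl.1, sandY m h1 h, hl.2⟩
      · have hr := right ((m : ℕ) - (k0 : ℕ)) m (by rw [Fin.lt_def] at h; omega) h2
        exact ⟨hr.1, hr.2, sandYb m h.le h2⟩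
    have hib : ∀ m : Fin N, (m : ℕ) + 1 = (i : ℕ) → Y t m < Y t i := by
      intro m hm
      have hle : Y t m ≤ Y t i := hYmono t ht.le (by rw [Fin.le_def]; omega)
      rcases eq_or_lt_of_le hle with he | h
      · exfalso
        have hmS : m ∈ S := by
          simp only [hSdef, Finset.mem_filter, Finset.mem_univ, true_and]
          rw [he, hYi]
        have := S.min'_le m hmS
        rw [← hidef, Fin.le_def] at this
        omega
      · exact h
    have hjb : ∀ m : Fin N, (m : ℕ) = (j : ℕ) + 1 → Ybar t j < Ybar t m := by
      intro m hm
      have hle : Ybar t j ≤ Ybar t m := hYbmono t ht.le (by rw [Fin.le_def]; omega)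
      rcases eq_or_lt_of_le hle with he | h
      · exfalso
        have hmT : m ∈ Tb := by
          simp only [hTdef, Finset.mem_filter, Finset.mem_univ, true_and]
          rw [← he, hYbj]
        have := Tb.le_max' m hmT
        rw [← hjdef, Fin.le_def] at this
        omega
      · exact h

    -- epsilon selection
    have hev : ∀ᶠ u in nhds t, (∀ m : Fin N, (m : ℕ) + 1 = (i : ℕ) → Y u m < Y u i) ∧
        (∀ m : Fin N, (m : ℕ) = (j : ℕ) + 1 → Ybar u j < Ybar u m) := by
      have e1 : ∀ᶠ u in nhds t, ∀ m : Fin N, (m : ℕ) + 1 = (i : ℕ) → Y u m < Y u i := by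
        by_cases h0 : (i : ℕ) = 0
        · exact Filter.Eventually.of_forall (fun u m hm => absurd hm (by omega))
        · set ip : Fin N := ⟨(i : ℕ) - 1, by have := i.isLt; omega⟩ with hipdef
          have hcont : Continuous fun u => Y u i - Y u ip := (hYc i).sub (hYc ip)
          have hpos : 0 < Y t i - Y t ip := by
            have := hib ip (by simp [hipdef]; omega)
            linarith
          have hev0 : ∀ᶠ u in nhds t, 0 < Y u i - Y u ip :=
            (hcont.tendsto t).eventually (eventually_gt_nhds hpos)
          filter_upwards [hev0] with u hu
          intro m hm
          have hmip : m = ip := Fin.ext (by simp [hipdef]; omega)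
          subst hmip
          linarith
      have e2 : ∀ᶠ u in nhds t, ∀ m : Fin N, (m : ℕ) = (j : ℕ) + 1 → Ybar u j < Ybar u m := by
        by_cases h0 : (j : ℕ) + 1 = N
        · exact Filter.Eventually.of_forall (fun u m hm => absurd hm (by have := m.isLt; omega))
        · set jn : Fin N := ⟨(j : ℕ) + 1, by have := j.isLt; omega⟩ with hjndef
          have hcont : Continuous fun u => Ybar u jn - Ybar u j := (hYbc jn).sub (hYbc j)
          have hpos : 0 < Ybar t jn - Ybar t j := by
            have := hjb jn (by simp [hjndef])
            linarith
          have hev0 : ∀ᶠ u in nhds t, 0 < Ybar u jn - Ybar u j :=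
            (hcont.tendsto t).eventually (eventually_gt_nhds hpos)
          filter_upwards [hev0] with u hu
          intro m hm
          have hmjn : m = jn := Fin.ext (by simp [hjndef]; omega)
          subst hmjn
          linarith
      exact e1.and e2
    obtain ⟨δ, hδ, hδP⟩ := Metric.eventually_nhds_iff.mp hev
    refine ⟨min (δ / 2) t, by positivity, min_le_right _ _, ?_⟩
    intro u hu
    have hu0 : 0 ≤ u := by
      have h1 := min_le_right (δ / 2) t
      have := hu.1
      linarith
    have hut : u ≤ t := hu.2
    have hdist : ∀ v ∈ Icc u t, dist v t < δ := by
      intro v hv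
      rw [Real.dist_eq, abs_lt]
      have h1 := min_le_left (δ / 2) t
      have := hu.1
      constructor <;> [linarith [hv.1]; linarith [hv.2]]
    -- local time constancy
    have hLcu : L u i.castSucc = L t i.castSucc := by
      by_cases h0 : (i : ℕ) = 0
      · have hi0 : i.castSucc = (0 : Fin (N + 1)) := by
          apply Fin.ext
          simp [h0]
        rw [hi0, (hLedge u).1, (hLedge t).1]
      · set ip : Fin N := ⟨(i : ℕ) - 1, by have := i.isLt; omega⟩ with hipdef
        have hk : (ip : ℕ) + 1 < N := by have := i.isLt; simp [hipdef]; omega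
        have hne : ∀ v ∈ Icc u t, Y v ip ≠ Y v ⟨(ip : ℕ) + 1, hk⟩ := by
          intro v hv
          have heq : (⟨(ip : ℕ) + 1, hk⟩ : Fin N) = i := Fin.ext (by simp [hipdef]; omega)
          rw [heq]
          exact ne_of_lt ((hδP (hdist v hv)).1 ip (by simp [hipdef]; omega))
        have := hLsupp ip hk u t hu0 hut hne
        have hsucc : ip.succ = i.castSucc := Fin.ext (by simp [hipdef]; omega)
        rw [hsucc] at this
        exact this.symm
    have hLbcu : Lbar u j.succ = Lbar t j.succ := by
      by_cases h0 : (j : ℕ) + 1 = N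
      · have hj0 : j.succ = Fin.last N := Fin.ext (by simp [h0])
        rw [hj0, (hLbedge u).2, (hLbedge t).2]
      · have hk : (j : ℕ) + 1 < N := by have := j.isLt; omega
        have hne : ∀ v ∈ Icc u t, Ybar v j ≠ Ybar v ⟨(j : ℕ) + 1, hk⟩ := by
          intro v hv
          exact ne_of_lt ((hδP (hdist v hv)).2 ⟨(j : ℕ) + 1, hk⟩ (by simp))
        exact (hLbsupp j hk u t hu0 hut hne).symm

    -- weighted sum computation
    have hiijj : (i : ℕ) ≤ (j : ℕ) := by rw [Fin.le_def] at hik0 hk0j; omega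
    have hjjN : (j : ℕ) < N := j.isLt
    set qp' : ℕ → ℝ := fun l => if h : l < N then qp ⟨l, h⟩ else 1 with hqp'def
    set qm' : ℕ → ℝ := fun l => if h : l < N then qm ⟨l, h⟩ else 1 with hqm'def
    set qpb' : ℕ → ℝ := fun l => if h : l < N then qpbar ⟨l, h⟩ else 1 with hqpb'def
    set qmb' : ℕ → ℝ := fun l => if h : l < N then qmbar ⟨l, h⟩ else 1 with hqmb'def
    have hqp'pos : ∀ l, 0 < qp' l := by
      intro l; by_cases h : l < N
      · simp only [hqp'def, dif_pos h]; exact (hq _).1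
      · simp [hqp'def, h]
    have hqm'pos : ∀ l, 0 < qm' l := by
      intro l; by_cases h : l < N
      · simp only [hqm'def, dif_pos h]; exact (hq _).2.2.1
      · simp [hqm'def, h]
    have hqpb'pos : ∀ l, 0 < qpb' l := by
      intro l; by_cases h : l < N
      · simp only [hqpb'def, dif_pos h]; exact (hqbar _).1
      · simp [hqpb'def, h]
    have hqmb'pos : ∀ l, 0 < qmb' l := by
      intro l; by_cases h : l < N
      · simp only [hqmb'def, dif_pos h]; exact (hqbar _).2.2.1
      · simp [hqmb'def, h]
    set w : ℕ → ℝ := fun m => ∏ l ∈ Finset.Ico (i : ℕ) m, (qm' l / qp' (l + 1)) with hwdef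
    have hwpos : ∀ m, 0 < w m := fun m =>
      Finset.prod_pos (fun l _ => div_pos (hqm'pos l) (hqp'pos (l + 1)))
    have hwi : w (i : ℕ) = 1 := by simp [hwdef]
    have hwsucc : ∀ m, (i : ℕ) ≤ m → w (m + 1) * qp' (m + 1) = w m * qm' m := by
      intro m hm
      have h1 : w (m + 1) = w m * (qm' m / qp' (m + 1)) := Finset.prod_Ico_succ_top hm _
      rw [h1]
      field_simp [(hqp'pos (m + 1)).ne']
    set Φ : ℝ → ℕ → ℝ := fun v m => if h : m < N then Y v ⟨m, h⟩ - Ybar v ⟨m, h⟩ else 0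
      with hΦdef
    set dL : ℕ → ℝ := fun p => if h : p < N + 1 then L t ⟨p, h⟩ - L u ⟨p, h⟩ else 0 with hdLdef
    set dLb : ℕ → ℝ := fun p => if h : p < N + 1 then Lbar t ⟨p, h⟩ - Lbar u ⟨p, h⟩ else 0
      with hdLbdef
    set XA : ℕ → ℝ := fun m => if h : m < N then
        (X t ⟨m, h⟩ - X u ⟨m, h⟩) - (Xbar t ⟨m, h⟩ - Xbar u ⟨m, h⟩) else 0 with hXAdef
    have hdLnn : ∀ p, 0 ≤ dL p := by
      intro p
      by_cases h : p < N + 1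
      · simp only [hdLdef, dif_pos h]
        have := hLmono ⟨p, h⟩ (mem_Ici.mpr hu0) (mem_Ici.mpr (le_trans hu0 hut)) hut
        linarith
      · simp only [hdLdef, dif_neg h, le_refl]
    have hdLbnn : ∀ p, 0 ≤ dLb p := by
      intro p
      by_cases h : p < N + 1
      · simp only [hdLbdef, dif_pos h]
        have := hLbmono ⟨p, h⟩ (mem_Ici.mpr hu0) (mem_Ici.mpr (le_trans hu0 hut)) hut
        linarith
      · simp only [hdLbdef, dif_neg h, le_refl]
    have hdLi : dL (i : ℕ) = 0 := by
      have h : (i : ℕ) < N + 1 := by have := i.isLt; omega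
      have hcs : (⟨(i : ℕ), h⟩ : Fin (N + 1)) = i.castSucc := Fin.ext (by simp)
      simp only [hdLdef, dif_pos h, hcs, hLcu, sub_self]
    have hdLbj : dLb ((j : ℕ) + 1) = 0 := by
      have h : (j : ℕ) + 1 < N + 1 := by have := j.isLt; omega
      have hcs : (⟨(j : ℕ) + 1, h⟩ : Fin (N + 1)) = j.succ := Fin.ext (by simp)
      simp only [hdLbdef, dif_pos h, hcs, hLbcu, sub_self]
    have hXAnp : ∀ m, XA m ≤ 0 := by
      intro m
      by_cases h : m < N
      · simp only [hXAdef, dif_pos h]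
        have := hincr u t hu0 hut ⟨m, h⟩
        linarith
      · simp [hXAdef, h]
    have hptid : ∀ m ∈ Finset.Icc (i : ℕ) (j : ℕ),
        w m * Φ t m - w m * Φ u m =
          w m * XA m + (w m * qp' m * dL m - w m * qm' m * dL (m + 1))
            - (w m * qpb' m * dLb m - w m * qmb' m * dLb (m + 1)) := by
      intro m hm
      have hmN : m < N := lt_of_le_of_lt (Finset.mem_Icc.mp hm).2 hjjN
      have hm1 : m < N + 1 := by omega
      have hm2 : m + 1 < N + 1 := by omega
      have E1 := hYeq t ht.le ⟨m, hmN⟩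
      have E2 := hYeq u hu0 ⟨m, hmN⟩
      have E3 := hYbeq t ht.le ⟨m, hmN⟩
      have E4 := hYbeq u hu0 ⟨m, hmN⟩
      have ecs : (⟨m, hmN⟩ : Fin N).castSucc = ⟨m, hm1⟩ := rfl
      have esc : (⟨m, hmN⟩ : Fin N).succ = ⟨m + 1, hm2⟩ := rfl
      rw [ecs, esc] at E1 E2 E3 E4
      simp only [hΦdef, hdLdef, hdLbdef, hXAdef, hqp'def, hqm'def, hqpb'def, hqmb'def,
        dif_pos hmN, dif_pos hm1, dif_pos hm2]
      rw [E1, E2, E3, E4]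
      ring
    have hsumid : ∑ m ∈ Finset.Icc (i : ℕ) (j : ℕ), (w m * Φ t m - w m * Φ u m) =
        (∑ m ∈ Finset.Icc (i : ℕ) (j : ℕ), w m * XA m)
        + (∑ m ∈ Finset.Icc (i : ℕ) (j : ℕ),
            (w m * qp' m * dL m - w m * qm' m * dL (m + 1)))
        - (∑ m ∈ Finset.Icc (i : ℕ) (j : ℕ),
            (w m * qpb' m * dLb m - w m * qmb' m * dLb (m + 1))) := by
      rw [Finset.sum_congr rfl hptid, Finset.sum_sub_distrib, Finset.sum_add_distrib]
    have hA : (∑ m ∈ Finset.Icc (i : ℕ) (j : ℕ), w m * XA m) ≤ 0 :=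
      Finset.sum_nonpos (fun m _ => mul_nonpos_of_nonneg_of_nonpos (hwpos m).le (hXAnp m))
    have hB : (∑ m ∈ Finset.Icc (i : ℕ) (j : ℕ),
        (w m * qp' m * dL m - w m * qm' m * dL (m + 1))) ≤ 0 := by
      have hint : ∀ p, (i : ℕ) < p → p ≤ (j : ℕ) →
          (fun m => w m * qp' m) p ≤ (fun m => w m * qm' m) (p - 1) := by
        intro p hp1 hp2
        have hp0 : 1 ≤ p := by omega
        have := hwsucc (p - 1) (by omega)
        have hpp : p - 1 + 1 = p := by omega
        rw [hpp] at this
        simp only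
        linarith
      have := tele_le (fun m => w m * qp' m) (fun m => w m * qm' m) dL (i : ℕ) hdLnn
        (j : ℕ) hiijj hint
      rw [hdLi] at this
      have h2 : 0 ≤ w (j : ℕ) * qm' (j : ℕ) * dL ((j : ℕ) + 1) :=
        mul_nonneg (mul_nonneg (hwpos _).le (hqm'pos _).le) (hdLnn _)
      linarith
    have hC : 0 ≤ (∑ m ∈ Finset.Icc (i : ℕ) (j : ℕ),
        (w m * qpb' m * dLb m - w m * qmb' m * dLb (m + 1))) := by
      have hint : ∀ p, (i : ℕ) < p → p ≤ (j : ℕ) →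
          (fun m => w m * qmb' m) (p - 1) ≤ (fun m => w m * qpb' m) p := by
        intro p hp1 hp2
        have hp0 : 1 ≤ p := by omega
        have hpN : p < N := by omega
        have hpN' : p - 1 + 1 < N := by omega
        have hmk : (⟨p - 1 + 1, hpN'⟩ : Fin N) = ⟨p, hpN⟩ := Fin.ext (by simp; omega)
        have hr1 := hrel ⟨p - 1, by omega⟩ hpN'
        have hr2 := hrelbar ⟨p - 1, by omega⟩ hpN'
        rw [hmk] at hr1 hr2
        have hcomp := hqcomp ⟨p, hpN⟩ (by simp; omega)
        have hqm'e : qm' (p - 1) = qm ⟨p - 1, by omega⟩ := by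
          simp only [hqm'def, dif_pos (show p - 1 < N by omega)]
        have hqmb'e : qmb' (p - 1) = qmbar ⟨p - 1, by omega⟩ := by
          simp only [hqmb'def, dif_pos (show p - 1 < N by omega)]
        have hqp'e : qp' p = qp ⟨p, hpN⟩ := by simp only [hqp'def, dif_pos hpN]
        have hqpb'e : qpb' p = qpbar ⟨p, hpN⟩ := by simp only [hqpb'def, dif_pos hpN]
        have hkey := hwsucc (p - 1) (by omega)
        have hpp : p - 1 + 1 = p := by omega
        rw [hpp] at hkey
        simp only
        have hwp := hwpos p
        have hwp1 := hwpos (p - 1)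
        -- qmb'(p-1) ≤ qm'(p-1)
        have hle1 : qmb' (p - 1) ≤ qm' (p - 1) := by
          rw [hqm'e, hqmb'e]; linarith
        -- w(p-1) qm'(p-1) = w p qp' p ≤ w p qpb' p
        have hle2 : qp' p ≤ qpb' p := by rw [hqp'e, hqpb'e]; exact hcomp
        nlinarith
      have := tele_ge (fun m => w m * qpb' m) (fun m => w m * qmb' m) dLb (i : ℕ) hdLbnn
        (j : ℕ) hiijj hint
      rw [hdLbj] at this
      have h2 : 0 ≤ w (i : ℕ) * qpb' (i : ℕ) * dLb (i : ℕ) :=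
        mul_nonneg (mul_nonneg (hwpos _).le (hqpb'pos _).le) (hdLbnn _)
      linarith
    have hst : ∑ m ∈ Finset.Icc (i : ℕ) (j : ℕ), w m * Φ t m =
        (∑ m ∈ Finset.Icc (i : ℕ) (j : ℕ), w m) * g t := by
      rw [Finset.sum_mul]
      refine Finset.sum_congr rfl (fun m hm => ?_)
      obtain ⟨hm1, hm2⟩ := Finset.mem_Icc.mp hm
      have hmN : m < N := lt_of_le_of_lt hm2 hjjN
      have hΦ : Φ t m = g t := by
        simp only [hΦdef, dif_pos hmN]
        exact (block ⟨m, hmN⟩ (by rw [Fin.le_def]; exact hm1)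
          (by rw [Fin.le_def]; exact hm2)).1
      rw [hΦ]
    have hsu : ∑ m ∈ Finset.Icc (i : ℕ) (j : ℕ), w m * Φ u m ≤
        (∑ m ∈ Finset.Icc (i : ℕ) (j : ℕ), w m) * g u := by
      rw [Finset.sum_mul]
      refine Finset.sum_le_sum (fun m hm => ?_)
      obtain ⟨hm1, hm2⟩ := Finset.mem_Icc.mp hm
      have hmN : m < N := lt_of_le_of_lt hm2 hjjN
      have hΦ : Φ u m = Y u ⟨m, hmN⟩ - Ybar u ⟨m, hmN⟩ := by simp only [hΦdef, dif_pos hmN]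
      rw [hΦ]
      exact mul_le_mul_of_nonneg_left (hgle u ⟨m, hmN⟩) (hwpos m).le
    have hwsumpos : 0 < ∑ m ∈ Finset.Icc (i : ℕ) (j : ℕ), w m :=
      Finset.sum_pos (fun m _ => hwpos m) (Finset.nonempty_Icc.mpr hiijj)
    have hdiff : ∑ m ∈ Finset.Icc (i : ℕ) (j : ℕ), w m * Φ t m
        - ∑ m ∈ Finset.Icc (i : ℕ) (j : ℕ), w m * Φ u m ≤ 0 := by
      rw [← Finset.sum_sub_distrib]
      rw [hsumid]
      linarith
    have hfin : (∑ m ∈ Finset.Icc (i : ℕ) (j : ℕ), w m) * g t ≤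
        (∑ m ∈ Finset.Icc (i : ℕ) (j : ℕ), w m) * g u := by
      rw [← hst]
      linarith
    exact (mul_le_mul_iff_right₀ hwsumpos).mp hfin


  -- conclusion
  intro T hT k
  by_contra hcon
  push_neg at hcon
  have hgT : 0 < g T := lt_of_lt_of_le (by linarith) (hgle T k)
  set C : Set ℝ := {s | s ∈ Icc 0 T ∧ g T ≤ g s} with hCdef
  have hC_closed : IsClosed C := by
    have : C = Icc 0 T ∩ (⋃ k : Fin N, {s | g T ≤ Y s k - Ybar s k}) := by
      ext s
      simp only [hCdef, Set.mem_setOf_eq, Set.mem_inter_iff, Set.mem_iUnion]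
      constructor
      · rintro ⟨h1, h2⟩
        refine ⟨h1, ?_⟩
        obtain ⟨k, hk⟩ := hgmem s
        exact ⟨k, hk ▸ h2⟩
      · rintro ⟨h1, k, hk⟩
        exact ⟨h1, le_trans hk (hgle s k)⟩
    rw [this]
    exact isClosed_Icc.inter (isClosed_iUnion_of_finite fun k =>
      isClosed_le continuous_const ((hYc k).sub (hYbc k)))
  have hC_ne : C.Nonempty := ⟨T, ⟨⟨hT, le_rfl⟩, le_rfl⟩⟩
  have hC_bdd : BddBelow C := ⟨0, fun s hs => hs.1.1⟩
  have ht0C : sInf C ∈ C := hC_closed.csInf_mem hC_ne hC_bdd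
  have ht0pos : 0 < sInf C := by
    rcases lt_or_eq_of_le ht0C.1.1 with h | h
    · exact h
    · exfalso; rw [← h] at ht0C; linarith [ht0C.2]
  obtain ⟨ε, hε, hεt, hloc⟩ := key (sInf C) ht0pos (lt_of_lt_of_le hgT ht0C.2)
  have hmem : sInf C - ε ∈ C := by
    refine ⟨⟨by linarith, by linarith [ht0C.1.2]⟩, ?_⟩
    exact le_trans ht0C.2 (hloc (sInf C - ε) ⟨le_rfl, by linarith⟩)
  have := csInf_le hC_bdd hmem
  linarith
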